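/- Let Ω: TM → V be a virtual immersion of a Riemannian manifold M with second fundamental form II. If II is symmetric, then dΩ = 0, and hence locally Ω = dφ for an isometric immersion φ: M → V. -/

import Mathlib

/-- (In the chart model where the manifold is a finite-dimensional
real vector space `E`, the flat connection `D` on `M × V` is `fderiv`, and `∇`
is the Levi-Civita connection of `g`.) If the second fundamental form
`II(X,Y) = D_X(Ω(Y)) − Ω(∇_X Y)` of a virtual immersion `Ω` is symmetric, then
`dΩ = 0`, and hence `Ω = dφ` for an isometric immersion `φ : M → V`. -/
theorem stmt_13 {E V : Type*}
    [NormedAddCommGroup E] [NormedSpace ℝ E] [FiniteDimensional ℝ E]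
    [NormedAddCommGroup V] [NormedSpace ℝ V] [FiniteDimensional ℝ V]
    -- the nondegenerate symmetric bilinear form on V
    (B : V →ₗ[ℝ] V →ₗ[ℝ] ℝ) (hBsymm : ∀ u v : V, B u v = B v u)
    (hBnd : ∀ u : V, (∀ v : V, B u v = 0) → u = 0)
    -- the Riemannian metric g
    (g : E → E →ₗ[ℝ] E →ₗ[ℝ] ℝ) (hgsymm : ∀ p (v w : E), g p v w = g p w v)
    (hgpos : ∀ p (v : E), v ≠ 0 → 0 < g p v v)
    -- the V-valued one-form Ω, satisfying condition (a)
    (Ω : E → (E →L[ℝ] V)) (hΩ : ContDiff ℝ (⊤ : ℕ∞) Ω)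
    (ha : ∀ p (v w : E), B (Ω p v) (Ω p w) = g p v w)
    -- condition (b): ⟨dΩ(X,Y), Ω(Z)⟩ = 0
    (hb : ∀ X Y : E → E, ContDiff ℝ (⊤ : ℕ∞) X → ContDiff ℝ (⊤ : ℕ∞) Y → ∀ p (z : E),
        B (fderiv ℝ (fun q => Ω q (Y q)) p (X p)
            - fderiv ℝ (fun q => Ω q (X q)) p (Y p)
            - Ω p (fderiv ℝ Y p (X p) - fderiv ℝ X p (Y p))) (Ω p z) = 0)
    -- the Levi-Civita connection ∇ of g: torsion-free and metric
    (nabla : (E → E) → (E → E) → (E → E))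
    (hns : ∀ X Y : E → E, ContDiff ℝ (⊤ : ℕ∞) X → ContDiff ℝ (⊤ : ℕ∞) Y →
      ContDiff ℝ (⊤ : ℕ∞) (nabla X Y))
    (htf : ∀ X Y : E → E, ContDiff ℝ (⊤ : ℕ∞) X → ContDiff ℝ (⊤ : ℕ∞) Y →
      ∀ p, nabla X Y p - nabla Y X p = fderiv ℝ Y p (X p) - fderiv ℝ X p (Y p))
    (hmetric : ∀ X Y Z : E → E, ContDiff ℝ (⊤ : ℕ∞) X → ContDiff ℝ (⊤ : ℕ∞) Y →
      ContDiff ℝ (⊤ : ℕ∞) Z → ∀ p,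
      fderiv ℝ (fun q => g q (Y q) (Z q)) p (X p)
        = g p (nabla X Y p) (Z p) + g p (Y p) (nabla X Z p))
    -- the second fundamental form II(X,Y) = D_X(Ω(Y)) − Ω(∇_X Y)
    (II : (E → E) → (E → E) → E → V)
    (hII : ∀ (X Y : E → E) p,
      II X Y p = fderiv ℝ (fun q => Ω q (Y q)) p (X p) - Ω p (nabla X Y p))
    -- II is symmetric
    (hsym : ∀ X Y : E → E, ContDiff ℝ (⊤ : ℕ∞) X → ContDiff ℝ (⊤ : ℕ∞) Y →
      ∀ p, II X Y p = II Y X p) :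
    -- dΩ = 0 ...
    (∀ X Y : E → E, ContDiff ℝ (⊤ : ℕ∞) X → ContDiff ℝ (⊤ : ℕ∞) Y → ∀ p,
        fderiv ℝ (fun q => Ω q (Y q)) p (X p)
          - fderiv ℝ (fun q => Ω q (X q)) p (Y p)
          - Ω p (fderiv ℝ Y p (X p) - fderiv ℝ X p (Y p)) = 0)
    -- ... and hence Ω = dφ with φ an isometric immersion
    ∧ ∃ φ : E → V, ∀ p, fderiv ℝ φ p = Ω p
        ∧ ∀ v w : E, B (fderiv ℝ φ p v) (fderiv ℝ φ p w) = g p v w := by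
  have hΩd : Differentiable ℝ Ω := hΩ.differentiable (by simp)
  -- Part 1 : dΩ = 0
  have hd : ∀ X Y : E → E, ContDiff ℝ (⊤ : ℕ∞) X → ContDiff ℝ (⊤ : ℕ∞) Y → ∀ p,
      fderiv ℝ (fun q => Ω q (Y q)) p (X p)
        - fderiv ℝ (fun q => Ω q (X q)) p (Y p)
        - Ω p (fderiv ℝ Y p (X p) - fderiv ℝ X p (Y p)) = 0 := by
    intro X Y hX hY p
    have h1 := hsym X Y hX hY p
    rw [hII, hII] at h1
    have h2 := htf X Y hX hY p
    rw [← h2, map_sub]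
    have h3 : fderiv ℝ (fun q => Ω q (Y q)) p (X p)
          - fderiv ℝ (fun q => Ω q (X q)) p (Y p)
          - (Ω p (nabla X Y p) - Ω p (nabla Y X p))
        = (fderiv ℝ (fun q => Ω q (Y q)) p (X p) - Ω p (nabla X Y p))
          - (fderiv ℝ (fun q => Ω q (X q)) p (Y p) - Ω p (nabla Y X p)) := by abel
    rw [h3, h1, sub_self]
  refine ⟨hd, ?_⟩
  -- fderiv of the evaluation of Ω at a fixed vector
  have heval : ∀ (p w : E),
      fderiv ℝ (fun q => Ω q w) p = (fderiv ℝ Ω p).flip w := by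
    intro p w
    have h : HasFDerivAt (fun q => Ω q w)
        ((Ω p).comp (0 : E →L[ℝ] E) + (fderiv ℝ Ω p).flip w) p :=
      (hΩd p).hasFDerivAt.clm_apply (hasFDerivAt_const w p)
    simpa using h.fderiv
  -- symmetry of the derivative of Ω
  have hΩsymm : ∀ (p v w : E), fderiv ℝ Ω p v w = fderiv ℝ Ω p w v := by
    intro p v w
    have h := hd (fun _ => v) (fun _ => w) contDiff_const contDiff_const p
    rw [heval p w, heval p v] at h
    simp only [fderiv_fun_const, Pi.zero_apply, ContinuousLinearMap.zero_apply, sub_zero,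
      sub_self, map_zero] at h
    have h' := sub_eq_zero.mp h
    simpa [ContinuousLinearMap.flip_apply] using h'
  -- the candidate derivative of the potential along the segment
  set F' : E → ℝ → E →L[ℝ] V := fun x t => Ω (t • x) + t • (fderiv ℝ Ω (t • x) x) with hF'
  have hF'cont : Continuous fun q : ℝ × E => F' q.2 q.1 := by
    have h1 : Continuous fun q : ℝ × E => q.1 • q.2 := continuous_fst.smul continuous_snd
    have h2 : Continuous fun q : ℝ × E => Ω (q.1 • q.2) := hΩ.continuous.comp h1
    have h3 : Continuous fun q : ℝ × E => fderiv ℝ Ω (q.1 • q.2) :=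
      (hΩ.continuous_fderiv (by simp)).comp h1
    exact h2.add (continuous_fst.smul (h3.clm_apply continuous_snd))
  -- differentiability in the space variable, using symmetry of fderiv Ω
  have hdiff : ∀ (t : ℝ) (x : E), HasFDerivAt (fun p => Ω (t • p) p) (F' x t) x := by
    intro t x
    have hsm : HasFDerivAt (fun p : E => t • p) (t • ContinuousLinearMap.id ℝ E) x := by
      exact ((ContinuousLinearMap.id ℝ E).hasFDerivAt (x := x)).const_smul t
    have hc : HasFDerivAt (fun p => Ω (t • p))
        ((fderiv ℝ Ω (t • x)).comp (t • ContinuousLinearMap.id ℝ E)) x :=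
      (hΩd (t • x)).hasFDerivAt.comp x hsm
    have h := hc.clm_apply (hasFDerivAt_id x)
    have h' : HasFDerivAt (fun p => Ω (t • p) p)
        ((Ω (t • x)).comp (ContinuousLinearMap.id ℝ E)
          + ((fderiv ℝ Ω (t • x)).comp (t • ContinuousLinearMap.id ℝ E)).flip (id x)) x := h
    convert h' using 1
    ext v
    simp only [hF', ContinuousLinearMap.add_apply, ContinuousLinearMap.comp_apply,
      ContinuousLinearMap.coe_id', id_eq, ContinuousLinearMap.flip_apply,
      ContinuousLinearMap.smul_apply, ContinuousLinearMap.coe_smul', Pi.smul_apply, map_smul]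
    rw [hΩsymm (t • x) x v]
  -- the potential
  set φ : E → V := fun p => ∫ t in (0:ℝ)..1, Ω (t • p) p with hφdef
  have key : ∀ x₀ : E, HasFDerivAt φ (Ω x₀) x₀ := by
    intro x₀
    -- the integral of F' x₀ over [0,1] is Ω x₀, by FTC applied to t ↦ t • Ω (t • x₀)
    have hFTC : (∫ t in (0:ℝ)..1, F' x₀ t) = Ω x₀ := by
      have hderiv : ∀ t ∈ Set.uIcc (0:ℝ) 1,
          HasDerivAt (fun s : ℝ => s • Ω (s • x₀)) (F' x₀ t) t := by
        intro t _
        have hs : HasDerivAt (fun s : ℝ => s • x₀) x₀ t := by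
          simpa using (hasDerivAt_id t).smul_const x₀
        have h1 : HasDerivAt (fun s : ℝ => Ω (s • x₀)) (fderiv ℝ Ω (t • x₀) x₀) t :=
          (hΩd (t • x₀)).hasFDerivAt.comp_hasDerivAt t hs
        have h2 := (hasDerivAt_id t).smul h1
        exact h2.congr_deriv (by simp [hF', add_comm])
      have hint : IntervalIntegrable (F' x₀) MeasureTheory.volume 0 1 :=
        ((hF'cont.comp (continuous_id.prodMk continuous_const)).intervalIntegrable 0 1)
      have := intervalIntegral.integral_eq_sub_of_hasDerivAt hderiv hint
      simpa using this
    -- bound for F' on a neighborhood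
    obtain ⟨C, hC⟩ := (((isCompact_Icc (a := (0:ℝ)) (b := 1)).prod
        (isCompact_closedBall x₀ 1))).exists_bound_of_continuousOn hF'cont.continuousOn
    have hmain : HasFDerivAt (fun x => ∫ t in (0:ℝ)..1, Ω (t • x) x)
        (∫ t in (0:ℝ)..1, F' x₀ t) x₀ := by
      apply intervalIntegral.hasFDerivAt_integral_of_dominated_of_fderiv_le
        (F := fun x t => Ω (t • x) x) (F' := F') (bound := fun _ => C)
        (Metric.ball_mem_nhds x₀ one_pos)
      · filter_upwards with x
        exact ((hΩ.continuous.comp (continuous_id.smul continuous_const)).clm_apply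
          continuous_const).aestronglyMeasurable
      · exact ((hΩ.continuous.comp (continuous_id.smul continuous_const)).clm_apply
          continuous_const).intervalIntegrable 0 1
      · exact ((hF'cont.comp (continuous_id.prodMk continuous_const))).aestronglyMeasurable
      · filter_upwards with t ht x hx
        exact hC (t, x) ⟨Set.mem_Icc.mpr ⟨le_of_lt (Set.mem_Ioc.mp
            (by simpa [Set.uIoc_of_le (zero_le_one' ℝ)] using ht)).1,
          (Set.mem_Ioc.mp (by simpa [Set.uIoc_of_le (zero_le_one' ℝ)] using ht)).2⟩,
          Metric.ball_subset_closedBall hx⟩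
      · exact intervalIntegrable_const
      · filter_upwards with t ht x hx
        exact hdiff t x
    rw [hFTC] at hmain
    exact hmain
  refine ⟨φ, fun p => ?_⟩
  have hfd : fderiv ℝ φ p = Ω p := (key p).fderiv
  exact ⟨hfd, fun v w => by rw [hfd]; exact ha p v w⟩
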